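/- Let β₁, k_θ > 0. Let 𝒢 ∈ ℝ^{p×p} be a constant symmetric matrix and Q ∈ ℝ^{p×n} a constant matrix. Let Γ : ℝ → ℝ^{p×p} be differentiable with Γ(t) symmetric and invertible for all t and Γ'(t) = β₁Γ(t) − k_θΓ(t)𝒢Γ(t), and let θ̃ : ℝ → ℝ^{p×n} be differentiable with θ̃'(t) = −k_θ Γ(t) 𝒢 θ̃(t) − k_θ Γ(t) Q. Then the function t ↦ ½ tr( θ̃(t)ᵀ Γ(t)⁻¹ θ̃(t) ) is differentiable with derivative equal to −½ tr( θ̃(t)ᵀ ( k_θ 𝒢 + β₁ Γ(t)⁻¹ ) θ̃(t) ) − k_θ tr( θ̃(t)ᵀ Q ) for all t. -/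

import Mathlib

open Matrix

attribute [local instance] Matrix.normedAddCommGroup Matrix.normedSpace

lemma hasDerivAt_matrix {a b : ℕ} {M : ℝ → Matrix (Fin a) (Fin b) ℝ}
    {M' : Matrix (Fin a) (Fin b) ℝ} {t : ℝ} :
    HasDerivAt M M' t ↔ ∀ i j, HasDerivAt (fun s => M s i j) (M' i j) t := by
  refine hasDerivAt_pi.trans ?_
  exact forall_congr' fun i => hasDerivAt_pi

lemma HasDerivAt.matMul {a b c : ℕ} {A : ℝ → Matrix (Fin a) (Fin b) ℝ}
    {B : ℝ → Matrix (Fin b) (Fin c) ℝ} {A' : Matrix (Fin a) (Fin b) ℝ}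
    {B' : Matrix (Fin b) (Fin c) ℝ} {t : ℝ}
    (hA : HasDerivAt A A' t) (hB : HasDerivAt B B' t) :
    HasDerivAt (fun s => A s * B s) (A' * B t + A t * B') t := by
  rw [hasDerivAt_matrix] at hA hB ⊢
  intro i j
  simp only [Matrix.mul_apply, Matrix.add_apply, ← Finset.sum_add_distrib]
  exact HasDerivAt.fun_sum fun k _ => ((hA i k).mul (hB k j))

lemma HasDerivAt.matTranspose {a b : ℕ} {M : ℝ → Matrix (Fin a) (Fin b) ℝ}
    {M' : Matrix (Fin a) (Fin b) ℝ} {t : ℝ} (h : HasDerivAt M M' t) :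
    HasDerivAt (fun s => (M s)ᵀ) M'ᵀ t := by
  rw [hasDerivAt_matrix] at h ⊢
  intro i j
  exact h j i

lemma differentiableAt_det {d : ℕ} {M : ℝ → Matrix (Fin d) (Fin d) ℝ} {t : ℝ}
    (h : ∀ i j, DifferentiableAt ℝ (fun s => M s i j) t) :
    DifferentiableAt ℝ (fun s => (M s).det) t := by
  simp only [Matrix.det_apply']
  exact DifferentiableAt.fun_sum fun σ _ =>
    (differentiableAt_const _).mul (DifferentiableAt.fun_finsetProd fun i _ => h (σ i) i)

lemma differentiableAt_inv_matrix {d : ℕ} {Γ : ℝ → Matrix (Fin d) (Fin d) ℝ} {t : ℝ}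
    (h : DifferentiableAt ℝ Γ t) (hu : IsUnit (Γ t)) :
    DifferentiableAt ℝ (fun s => (Γ s)⁻¹) t := by
  have hent : ∀ i j, DifferentiableAt ℝ (fun s => Γ s i j) t := by
    intro i j
    exact ((differentiableAt_pi.mp (differentiableAt_pi.mp h i)) j)
  have hdet : DifferentiableAt ℝ (fun s => (Γ s).det) t := differentiableAt_det hent
  have hdetne : (Γ t).det ≠ 0 := by
    have := (Matrix.isUnit_iff_isUnit_det _).mp hu
    exact IsUnit.ne_zero this
  have hadj : ∀ i j, DifferentiableAt ℝ (fun s => (Γ s).adjugate i j) t := by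
    intro i j
    simp only [Matrix.adjugate_apply]
    refine differentiableAt_det ?_
    intro a b
    simp only [Matrix.updateRow_apply]
    by_cases hab : a = j <;> simp [hab, hent]
  have : (fun s => (Γ s)⁻¹) = fun s => ((Γ s).det)⁻¹ • (Γ s).adjugate := by
    funext s; rw [Matrix.inv_def, Ring.inverse_eq_inv]
  rw [this]
  refine differentiableAt_pi.mpr ?_
  intro i
  refine differentiableAt_pi.mpr ?_
  intro j
  exact (hdet.inv hdetne).mul (hadj i j)

lemma hasDerivAt_inv_matrix {d : ℕ} {Γ : ℝ → Matrix (Fin d) (Fin d) ℝ}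
    {Γ' : Matrix (Fin d) (Fin d) ℝ} {t : ℝ}
    (h : HasDerivAt Γ Γ' t) (hu : ∀ s, IsUnit (Γ s)) :
    HasDerivAt (fun s => (Γ s)⁻¹) (-((Γ t)⁻¹ * Γ' * (Γ t)⁻¹)) t := by
  have hdiff : DifferentiableAt ℝ (fun s => (Γ s)⁻¹) t :=
    differentiableAt_inv_matrix h.differentiableAt (hu t)
  have hI := hdiff.hasDerivAt
  have hprod := hI.matMul h
  have hone : (fun s => (Γ s)⁻¹ * Γ s) = fun _ => (1 : Matrix (Fin d) (Fin d) ℝ) := by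
    funext s
    exact Matrix.nonsing_inv_mul _ ((Matrix.isUnit_iff_isUnit_det _).mp (hu s))
  rw [hone] at hprod
  have hzero := (hasDerivAt_const t (1 : Matrix (Fin d) (Fin d) ℝ)).unique hprod
  have key : deriv (fun s => (Γ s)⁻¹) t * Γ t = -((Γ t)⁻¹ * Γ') := by
    have := hzero.symm
    rw [add_eq_zero_iff_eq_neg] at this
    exact this
  have h2 : deriv (fun s => (Γ s)⁻¹) t = -((Γ t)⁻¹ * Γ' * (Γ t)⁻¹) := by
    have := congrArg (· * (Γ t)⁻¹) key
    simpa [Matrix.mul_assoc,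
      Matrix.mul_nonsing_inv _ ((Matrix.isUnit_iff_isUnit_det _).mp (hu t))] using this
  rw [← h2]
  exact hI

theorem stmt_10 (n d : ℕ) (β₁ kθ : ℝ) (hβ₁ : 0 < β₁) (hkθ : 0 < kθ)
    (𝒢 : Matrix (Fin d) (Fin d) ℝ) (h𝒢sym : 𝒢.IsSymm) (Q : Matrix (Fin d) (Fin n) ℝ)
    (Γ : ℝ → Matrix (Fin d) (Fin d) ℝ)
    (hΓsym : ∀ t, (Γ t).IsSymm) (hΓunit : ∀ t, IsUnit (Γ t))
    (hΓ' : ∀ t, HasDerivAt Γ (β₁ • Γ t - kθ • (Γ t * 𝒢 * Γ t)) t)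
    (θtil : ℝ → Matrix (Fin d) (Fin n) ℝ)
    (hθtil' : ∀ t, HasDerivAt θtil (-(kθ • (Γ t * 𝒢 * θtil t)) - kθ • (Γ t * Q)) t)
    (t : ℝ) :
    HasDerivAt (fun s => (1 / 2) * ((θtil s)ᵀ * (Γ s)⁻¹ * θtil s).trace)
      (-(1 / 2) * ((θtil t)ᵀ * (kθ • 𝒢 + β₁ • (Γ t)⁻¹) * θtil t).trace
        - kθ * ((θtil t)ᵀ * Q).trace) t := by
  set A := Γ t with hA
  set θ := θtil t with hθ
  set θ' := -(kθ • (A * 𝒢 * θ)) - kθ • (A * Q) with hθ'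
  have hdu : IsUnit A.det := (Matrix.isUnit_iff_isUnit_det _).mp (hΓunit t)
  have hI : HasDerivAt (fun s => (Γ s)⁻¹)
      (-(A⁻¹ * (β₁ • A - kθ • (A * 𝒢 * A)) * A⁻¹)) t :=
    hasDerivAt_inv_matrix (hΓ' t) hΓunit
  have hT : HasDerivAt (fun s => (θtil s)ᵀ) θ'ᵀ t := (hθtil' t).matTranspose
  have hP := (hT.matMul hI).matMul (hθtil' t)
  -- derivative of the trace
  have htr : HasDerivAt (fun s => ((θtil s)ᵀ * (Γ s)⁻¹ * θtil s).trace)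
      (((θ'ᵀ * A⁻¹ + θᵀ * -(A⁻¹ * (β₁ • A - kθ • (A * 𝒢 * A)) * A⁻¹)) * θ
        + θᵀ * A⁻¹ * θ').trace) t := by
    simp only [Matrix.trace, Matrix.diag]
    exact HasDerivAt.fun_sum fun i _ => (hasDerivAt_matrix.mp hP i i)
  have hfinal := htr.const_mul (1 / 2 : ℝ)
  have hEq : (1 / 2 : ℝ) * ((θ'ᵀ * A⁻¹ + θᵀ * -(A⁻¹ * (β₁ • A - kθ • (A * 𝒢 * A)) * A⁻¹)) * θ
        + θᵀ * A⁻¹ * θ').trace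
      = -(1 / 2) * (θᵀ * (kθ • 𝒢 + β₁ • A⁻¹) * θ).trace - kθ * (θᵀ * Q).trace := by
    have hAT : Aᵀ = A := hΓsym t
    have hGT : 𝒢ᵀ = 𝒢 := h𝒢sym
    have hc1 : A * A⁻¹ = 1 := Matrix.mul_nonsing_inv _ hdu
    have hc2 : A⁻¹ * A = 1 := Matrix.nonsing_inv_mul _ hdu
    have c1 : ∀ B : Matrix (Fin d) (Fin n) ℝ, A⁻¹ * (A * B) = B := fun B =>
      Matrix.nonsing_inv_mul_cancel_left A B hdu
    have c2 : ∀ B : Matrix (Fin d) (Fin n) ℝ, A * (A⁻¹ * B) = B := fun B =>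
      Matrix.mul_nonsing_inv_cancel_left A B hdu
    have c3 : ∀ B : Matrix (Fin d) (Fin d) ℝ, A⁻¹ * (A * B) = B := fun B =>
      Matrix.nonsing_inv_mul_cancel_left A B hdu
    have c4 : ∀ B : Matrix (Fin d) (Fin d) ℝ, A * (A⁻¹ * B) = B := fun B =>
      Matrix.mul_nonsing_inv_cancel_left A B hdu
    have hinv : -(A⁻¹ * (β₁ • A - kθ • (A * 𝒢 * A)) * A⁻¹) = kθ • 𝒢 - β₁ • A⁻¹ := by
      simp [Matrix.mul_assoc, Matrix.mul_sub, Matrix.sub_mul, Matrix.mul_smul,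
        Matrix.smul_mul, hc1, hc2, c3, c4, neg_sub]
    have h1 : θᵀ * A⁻¹ * θ' = -(kθ • (θᵀ * (𝒢 * θ))) - kθ • (θᵀ * Q) := by
      rw [hθ']
      simp [Matrix.mul_assoc, Matrix.mul_sub, Matrix.mul_neg, Matrix.mul_smul,
        c1, c2, c3, c4, hc1, hc2]
    have h2 : θ'ᵀ * A⁻¹ = -(kθ • (θᵀ * 𝒢)) - kθ • Qᵀ := by
      rw [hθ']
      simp only [Matrix.transpose_sub, Matrix.transpose_neg, Matrix.transpose_smul,
        Matrix.transpose_mul, hAT, hGT]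
      simp [Matrix.mul_assoc, Matrix.sub_mul, Matrix.neg_mul, Matrix.smul_mul,
        hc1, hc2]
    rw [h1, h2, hinv]
    have hQ : (Qᵀ * θ).trace = (θᵀ * Q).trace := by
      rw [← Matrix.trace_transpose (θᵀ * Q), Matrix.transpose_mul, Matrix.transpose_transpose]
    simp only [Matrix.add_mul, Matrix.sub_mul, Matrix.neg_mul, Matrix.smul_mul,
      Matrix.mul_add, Matrix.mul_sub, Matrix.mul_smul, Matrix.mul_assoc,
      Matrix.trace_add, Matrix.trace_sub, Matrix.trace_smul, Matrix.trace_neg,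
      smul_eq_mul, hQ]
    ring
  rw [← hEq]
  exact hfinal
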